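/- For m, d, j ≥ 1 with 2j ≤ d − 1 and for each x with 1 ≤ x ≤ min(m, d−2j), there is exactly one Littlewood-Richardson tableau of skew shape (m+d−2j, (d−2j+1)^j) / ((d−2j−1)^j) and content (m+d−2j−x+1, x+1, 2^{j−1}); moreover every Littlewood-Richardson tableau of this shape has content of this form for some such x. -/

import Mathlib

open Finset

/-- The cells of the skew shape `λ/μ` in row `r` are the columns `c` with
`μ_r ≤ c < λ_r`. `T` is a semistandard filling of `λ/μ` (with positive integer
entries, normalized to `0` outside the shape): weakly increasing along rows and
strictly increasing down columns. -/
def IsSSYT (L : ℕ) (lam mu : Fin L → ℕ) (T : Fin L → ℕ → ℕ) : Prop :=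
  (∀ r c, ¬ (mu r ≤ c ∧ c < lam r) → T r c = 0) ∧
  (∀ r c, mu r ≤ c → c < lam r → 1 ≤ T r c) ∧
  (∀ r, ∀ c₁ c₂, mu r ≤ c₁ → c₁ ≤ c₂ → c₂ < lam r → T r c₁ ≤ T r c₂) ∧
  (∀ r₁ r₂ : Fin L, r₁ < r₂ → ∀ c, mu r₁ ≤ c → c < lam r₁ → mu r₂ ≤ c → c < lam r₂ →
    T r₁ c < T r₂ c)

/-- The reverse reading word of a filling `T` of the skew shape `λ/μ`: the entries of
each row read from right to left, rows concatenated from top to bottom. -/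
def revWord (L : ℕ) (lam mu : Fin L → ℕ) (T : Fin L → ℕ → ℕ) : List ℕ :=
  (List.finRange L).flatMap
    (fun r => (List.range (lam r - mu r)).map (fun k => T r (lam r - 1 - k)))

/-- A word is a lattice permutation: in every prefix, the number of `i`'s is at least
the number of `(i+1)`'s, for every `i ≥ 1`. -/
def IsLatticeWord (w : List ℕ) : Prop :=
  ∀ p i, 1 ≤ i → (w.take p).count (i + 1) ≤ (w.take p).count i

/-- `T` is a Littlewood-Richardson tableau of shape `λ/μ`: a semistandard Young
tableau whose reverse reading word is a lattice permutation. -/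
def IsLRTableau (L : ℕ) (lam mu : Fin L → ℕ) (T : Fin L → ℕ → ℕ) : Prop :=
  IsSSYT L lam mu T ∧ IsLatticeWord (revWord L lam mu T)

/-- `T` has content `ν`: for every `i ≥ 1`, the number of entries equal to `i`
is `ν_i`. -/
def HasContent (L : ℕ) (lam mu : Fin L → ℕ) (T : Fin L → ℕ → ℕ) (nu : ℕ → ℕ) : Prop :=
  ∀ i, 1 ≤ i → (revWord L lam mu T).count i = nu i

/-- The content `(m+d-2j-x+1, x+1, 2^{j-1})`, as a function on `{1, 2, …}`. -/
def uniformContent (m d j x : ℕ) : ℕ → ℕ := fun i =>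
  if i = 1 then m + d - 2*j - x + 1
  else if i = 2 then x + 1
  else if i ≤ j + 1 then 2 else 0

namespace S9

/-- `[2,2,3,3,...,J+1,J+1]`. -/
def DW (J : ℕ) : List ℕ := (List.range J).flatMap (fun s => [s+2, s+2])

lemma DW_succ (J : ℕ) : DW (J+1) = DW J ++ [J+2, J+2] := by
  simp [DW, List.range_succ]

lemma length_DW (J : ℕ) : (DW J).length = 2*J := by
  induction J with
  | zero => rfl
  | succ J ih => rw [DW_succ]; simp [ih]; omega

lemma count_DW (J i : ℕ) : (DW J).count i = if 2 ≤ i ∧ i ≤ J+1 then 2 else 0 := by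
  induction J with
  | zero =>
    simp only [DW, List.range_zero, List.flatMap_nil, List.count_nil]
    split_ifs <;> omega
  | succ J ih =>
    rw [DW_succ, List.count_append, ih]
    have : List.count i [J+2, J+2] = if i = J + 2 then 2 else 0 := by
      rcases eq_or_ne i (J+2) with h|h <;> simp [h, List.count_cons, List.count_nil] <;> omega
    rw [this]; split_ifs <;> omega

lemma count_take_le (l : List ℕ) (q a : ℕ) : (l.take q).count a ≤ l.count a :=
  (List.take_sublist q l).count_le a

lemma DW_lattice (J q i : ℕ) (hi : 2 ≤ i) :
    ((DW J).take q).count (i+1) ≤ ((DW J).take q).count i := by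
  induction J generalizing q with
  | zero => simp [DW]
  | succ J ih =>
    rw [DW_succ, List.take_append, List.count_append, List.count_append]
    rcases eq_or_ne i (J+1) with rfl | hne
    · simp only [show J+1+1 = J+2 from rfl]
      have h1 : ((DW J).take q).count (J+2) = 0 := by
        have h2 := count_take_le (DW J) q (J+2)
        rw [count_DW] at h2
        simp only [show ¬(2 ≤ J+2 ∧ J+2 ≤ J+1) from by omega, if_false] at h2
        omega
      rw [h1]
      by_cases hq : q - (DW J).length = 0
      · rw [hq]
        simp
      · have hfull : (DW J).take q = DW J := List.take_of_length_le (by omega)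
        have h3 : ((DW J).take q).count (J+1) = 2 := by
          rw [hfull, count_DW, if_pos (by omega : 2 ≤ J+1 ∧ J+1 ≤ J+1)]
        have h4 : (([J+2, J+2] : List ℕ).take (q - (DW J).length)).count (J+2) ≤ 2 :=
          le_trans (count_take_le _ _ _)
            (le_trans List.count_le_length (by simp))
        omega
    · have h5 : (([J+2, J+2] : List ℕ).take (q - (DW J).length)).count (i+1) = 0 := by
        have := count_take_le [J+2, J+2] (q - (DW J).length) (i+1)
        have h6 : (([J+2, J+2] : List ℕ)).count (i+1) = 0 := by
          simp [List.count_cons]; omega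
        omega
      rw [h5]
      have := ih q
      omega

lemma take_flatMap (f : ℕ → List ℕ) (R r k : ℕ) (hr : r < R) (hk : k ≤ (f r).length) :
    ((List.range R).flatMap f).take (((List.range r).flatMap f).length + k)
      = (List.range r).flatMap f ++ (f r).take k := by
  have hR : R = r + (R - r - 1 + 1) := by omega
  rw [hR, List.range_add, List.flatMap_append, List.take_append,
      List.take_of_length_le (by omega), Nat.add_sub_cancel_left]
  congr 1
  rw [List.range_succ_eq_map, List.map_cons]
  simp only [Nat.add_zero]
  rw [List.flatMap_cons, List.take_append_of_le_length hk]

def lamF (m n j : ℕ) : Fin (j+1) → ℕ := fun k => if (k:ℕ) = 0 then m + n else n + 1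
def muF (n j : ℕ) : Fin (j+1) → ℕ := fun k => if (k:ℕ) < j then n - 1 else 0

def uC (m n j x : ℕ) : ℕ → ℕ := fun i =>
  if i = 1 then m + n - x + 1 else if i = 2 then x + 1 else if i ≤ j + 1 then 2 else 0

def TX (m n j x : ℕ) : Fin (j+1) → ℕ → ℕ := fun r c =>
  if (r:ℕ) = 0 then (if n - 1 ≤ c ∧ c < m + n then 1 else 0)
  else if (r:ℕ) < j then (if n - 1 ≤ c ∧ c < n + 1 then (r:ℕ) + 1 else 0)
  else if c < n + 1 then (if n - 1 ≤ c then j + 1 else if n - x ≤ c then 2 else 1) else 0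

def Blk (m n j : ℕ) (T : Fin (j+1) → ℕ → ℕ) (r : ℕ) : List ℕ :=
  if h : r < j + 1 then
    (List.range (lamF m n j ⟨r, h⟩ - muF n j ⟨r, h⟩)).map
      (fun k => T ⟨r, h⟩ (lamF m n j ⟨r, h⟩ - 1 - k)) else []

lemma revWord_eq (m n j : ℕ) (T : Fin (j+1) → ℕ → ℕ) :
    revWord (j+1) (lamF m n j) (muF n j) T = (List.range (j+1)).flatMap (Blk m n j T) := by
  rw [revWord, ← (show (List.finRange (j+1)).map Fin.val = List.range (j+1) from
    List.ext_getElem (by simp) (by simp)), List.flatMap_map]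
  congr 1
  funext r
  rw [Blk, dif_pos r.isLt]

lemma Blk_zero (m n j : ℕ) (T : Fin (j+1) → ℕ → ℕ) (hn : 1 ≤ n) (hj : 1 ≤ j) :
    Blk m n j T 0 = (List.range (m+1)).map (fun k => T ⟨0, Nat.succ_pos j⟩ (m+n-1-k)) := by
  rw [Blk, dif_pos (Nat.succ_pos j)]
  have h1 : lamF m n j ⟨0, Nat.succ_pos j⟩ = m + n := by simp [lamF]
  have h2 : muF n j ⟨0, Nat.succ_pos j⟩ = n - 1 := by
    simp only [muF]; rw [if_pos]; simpa using (show 0 < j by omega)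
  rw [h1, h2, show m + n - (n - 1) = m + 1 from by omega]

lemma Blk_mid (m n j : ℕ) (T : Fin (j+1) → ℕ → ℕ) (hn : 1 ≤ n) (r : ℕ)
    (h1 : 1 ≤ r) (h2 : r < j) :
    Blk m n j T r = [T ⟨r, by omega⟩ n, T ⟨r, by omega⟩ (n-1)] := by
  rw [Blk, dif_pos (by omega : r < j + 1)]
  have e1 : lamF m n j ⟨r, by omega⟩ = n + 1 := by
    simp only [lamF]; rw [if_neg]; simpa using (by omega : ¬ r = 0)
  have e2 : muF n j ⟨r, by omega⟩ = n - 1 := by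
    simp only [muF]; rw [if_pos]; simpa using h2
  rw [e1, e2]
  have e3 : n + 1 - (n - 1) = 2 := by omega
  rw [e3, show List.range 2 = [0, 1] from rfl]
  simp only [List.map_cons, List.map_nil]
  congr 2 <;> omega

lemma Blk_last (m n j : ℕ) (T : Fin (j+1) → ℕ → ℕ) (hj : 1 ≤ j) :
    Blk m n j T j = (List.range (n+1)).map (fun k => T ⟨j, by omega⟩ (n-k)) := by
  rw [Blk, dif_pos (by omega : j < j + 1)]
  have e1 : lamF m n j ⟨j, by omega⟩ = n + 1 := by
    simp only [lamF]; rw [if_neg]; simpa using (by omega : ¬ j = 0)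
  have e2 : muF n j ⟨j, by omega⟩ = 0 := by
    simp only [muF]; rw [if_neg]; simp
  rw [e1, e2]
  rfl

/-- Count of a letter in the first `r` blocks, assuming the standard block values. -/
lemma count_pre (m n j : ℕ) (T : Fin (j+1) → ℕ → ℕ) (r : ℕ) (h1 : 1 ≤ r) (hr : r ≤ j)
    (hB0 : Blk m n j T 0 = List.replicate (m+1) 1)
    (hBs : ∀ s, 1 ≤ s → s < r → Blk m n j T s = [s+1, s+1])
    (i : ℕ) (hi : 1 ≤ i) :
    ((List.range r).flatMap (Blk m n j T)).count i
      = (if i = 1 then m+1 else 0) + (if 2 ≤ i ∧ i ≤ r then 2 else 0) := by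
  induction r with
  | zero => omega
  | succ r ih =>
    by_cases hr0 : r = 0
    · subst hr0
      rw [show List.range 1 = [0] from rfl]
      simp only [List.flatMap_cons, List.flatMap_nil, List.append_nil, hB0,
        List.count_replicate]
      split_ifs with h h' h' <;> simp_all <;> omega
    · rw [List.range_succ, List.flatMap_append, List.count_append,
        ih (by omega) (by omega) (fun s hs1 hsr => hBs s hs1 (by omega))]
      rw [List.flatMap_cons, List.flatMap_nil, List.append_nil,
        hBs r (by omega) (by omega)]
      have : List.count i [r+1, r+1] = if i = r + 1 then 2 else 0 := by
        rcases eq_or_ne i (r+1) with h|h <;> simp [h, List.count_cons, List.count_nil] <;> omega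
      rw [this]
      split_ifs <;> omega

lemma characterize (m n j : ℕ) (hm : 1 ≤ m) (hn : 1 ≤ n) (hj : 1 ≤ j)
    (T : Fin (j+1) → ℕ → ℕ)
    (hT : IsLRTableau (j+1) (lamF m n j) (muF n j) T) :
    ∃ x, 1 ≤ x ∧ x ≤ m ∧ x ≤ n ∧ T = TX m n j x := by
  obtain ⟨⟨hz, hpos, hrow, hcol⟩, hlat⟩ := hT
  rw [IsLatticeWord, revWord_eq] at hlat
  -- basic shape evaluations
  have hmu_le : ∀ (r : Fin (j+1)) c, n - 1 ≤ c → muF n j r ≤ c := by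
    intro r c hc; simp only [muF]; split_ifs <;> omega
  have hmu0 : ∀ (r : Fin (j+1)), muF n j r ≤ n - 1 := by
    intro r; simp only [muF]; split_ifs <;> omega
  have hlam_pos : ∀ (r : Fin (j+1)), (r:ℕ) ≠ 0 → lamF m n j r = n + 1 := by
    intro r hr; simp only [lamF, if_neg hr]
  have hlam_zero : ∀ (r : Fin (j+1)), (r:ℕ) = 0 → lamF m n j r = m + n := by
    intro r hr; simp only [lamF, if_pos hr]
  have h0lt : (0:ℕ) < j + 1 := by omega
  have hjlt : j < j + 1 := by omega
  have hmujj : muF n j ⟨j, hjlt⟩ = 0 := if_neg (by exact (by omega : ¬ j < j))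
  have hlamjj : lamF m n j ⟨j, hjlt⟩ = n + 1 := hlam_pos _ (by exact (by omega : ¬ j = 0))
  -- Step A : row 0 is all 1's
  have hv1 : T ⟨0, h0lt⟩ (m+n-1) = 1 := by
    by_contra hne
    have hge : 1 ≤ T ⟨0, h0lt⟩ (m+n-1) :=
      hpos _ _ (hmu_le _ _ (by omega)) (by rw [hlam_zero _ rfl]; omega)
    have hlen0 : 1 ≤ (Blk m n j T 0).length := by
      rw [Blk_zero m n j T hn hj]; simp
    have htk := take_flatMap (Blk m n j T) (j+1) 0 1 (by omega) hlen0
    simp only [List.range_zero, List.flatMap_nil, List.length_nil, List.nil_append,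
      Nat.zero_add] at htk
    have htk1 : (Blk m n j T 0).take 1 = [T ⟨0, h0lt⟩ (m+n-1)] := by
      rw [Blk_zero m n j T hn hj, ← List.map_take, List.take_range,
        show min 1 (m+1) = 1 from by omega]
      rfl
    rw [htk1] at htk
    have hl := hlat 1 (T ⟨0, h0lt⟩ (m+n-1) - 1) (by omega)
    rw [htk, show T ⟨0, h0lt⟩ (m+n-1) - 1 + 1 = T ⟨0, h0lt⟩ (m+n-1) from by omega] at hl
    have c1 : List.count (T ⟨0, h0lt⟩ (m+n-1)) [T ⟨0, h0lt⟩ (m+n-1)] = 1 := by simp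
    have c2 : List.count (T ⟨0, h0lt⟩ (m+n-1) - 1) [T ⟨0, h0lt⟩ (m+n-1)] = 0 :=
      List.count_eq_zero.mpr (by
        intro hmem
        rw [List.mem_singleton] at hmem
        omega)
    rw [c1, c2] at hl
    omega
  have row0 : ∀ c, n - 1 ≤ c → c < m + n → T ⟨0, h0lt⟩ c = 1 := by
    intro c h1 h2
    have hle := hrow ⟨0, h0lt⟩ c (m+n-1) (hmu_le _ _ h1) (by omega)
      (by rw [hlam_zero _ rfl]; omega)
    have hge := hpos ⟨0, h0lt⟩ c (hmu_le _ _ h1) (by rw [hlam_zero _ rfl]; omega)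
    rw [hv1] at hle
    omega
  have hB0 : Blk m n j T 0 = List.replicate (m+1) 1 := by
    rw [Blk_zero m n j T hn hj]
    refine List.eq_replicate_iff.mpr ⟨by simp, ?_⟩
    intro b hb
    simp only [List.mem_map, List.mem_range] at hb
    obtain ⟨k, hk, rfl⟩ := hb
    exact row0 _ (by omega) (by omega)
  -- Step B : the two distinguished columns
  have main : ∀ r (hr1 : 1 ≤ r) (hrj : r ≤ j),
      T ⟨r, by omega⟩ (n-1) = r + 1 ∧ T ⟨r, by omega⟩ n = r + 1 := by
    intro r
    induction r using Nat.strong_induction_on with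
    | _ r ih =>
    intro hr1 hrj
    have hBs : ∀ s, 1 ≤ s → s < r → Blk m n j T s = [s+1, s+1] := by
      intro s hs1 hsr
      rw [Blk_mid m n j T hn s hs1 (by omega),
        (ih s hsr hs1 (by omega)).1, (ih s hsr hs1 (by omega)).2]
    have hcnt := fun i hi => count_pre m n j T r hr1 hrj hB0 hBs i hi
    have hrlt : r < j + 1 := by omega
    have hlamr : lamF m n j ⟨r, hrlt⟩ = n + 1 := hlam_pos _ (by exact (by omega : ¬ r = 0))
    -- lower bound for T r n
    have hbl : r + 1 ≤ T ⟨r, hrlt⟩ n := by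
      by_cases h1 : r = 1
      · subst h1
        have hc := hcol ⟨0, h0lt⟩ ⟨1, hrlt⟩ (Fin.mk_lt_mk.mpr (by omega)) n
          (hmu_le _ _ (by omega)) (by rw [hlam_zero _ rfl]; omega)
          (hmu_le _ _ (by omega)) (by rw [hlamr]; omega)
        rw [row0 n (by omega) (by omega)] at hc
        omega
      · have hv := (ih (r-1) (by omega) (by omega) (by omega)).2
        have hc := hcol ⟨r-1, by omega⟩ ⟨r, hrlt⟩ (Fin.mk_lt_mk.mpr (by omega)) n
          (hmu_le _ _ (by omega))
          (by rw [hlam_pos _ (by exact (by omega : ¬ r - 1 = 0))]; omega)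
          (hmu_le _ _ (by omega)) (by rw [hlamr]; omega)
        rw [hv] at hc
        omega
    -- upper bound for T r n via the lattice property
    have hlen_r : 1 ≤ (Blk m n j T r).length := by
      by_cases hrj' : r < j
      · rw [Blk_mid m n j T hn r hr1 hrj']; simp
      · have hrj'' : r = j := by omega
        rw [hrj'', Blk_last m n j T hj]; simp
    have htop : (Blk m n j T r).take 1 = [T ⟨r, hrlt⟩ n] := by
      by_cases hrj' : r < j
      · rw [Blk_mid m n j T hn r hr1 hrj']; rfl
      · have hrj'' : r = j := by omega
        have hfe : (⟨r, hrlt⟩ : Fin (j+1)) = ⟨j, hjlt⟩ := Fin.ext (by exact hrj'')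
        rw [hfe, show Blk m n j T r = Blk m n j T j from by rw [hrj''],
          Blk_last m n j T hj, ← List.map_take, List.take_range,
          show min 1 (n+1) = 1 from by omega]
        rfl
    have hbu : T ⟨r, hrlt⟩ n ≤ r + 1 := by
      by_contra hcon
      push_neg at hcon
      have htk := take_flatMap (Blk m n j T) (j+1) r 1 (by omega) hlen_r
      rw [htop] at htk
      have hl := hlat (((List.range r).flatMap (Blk m n j T)).length + 1)
        (T ⟨r, hrlt⟩ n - 1) (by omega)
      rw [htk, List.count_append, List.count_append,
        show T ⟨r, hrlt⟩ n - 1 + 1 = T ⟨r, hrlt⟩ n from by omega,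
        hcnt (T ⟨r, hrlt⟩ n) (by omega), hcnt (T ⟨r, hrlt⟩ n - 1) (by omega)] at hl
      simp only [List.count_cons, List.count_nil, beq_iff_eq] at hl
      split_ifs at hl <;> omega
    -- column n-1
    have hau : T ⟨r, hrlt⟩ (n-1) ≤ T ⟨r, hrlt⟩ n :=
      hrow ⟨r, hrlt⟩ (n-1) n (hmu0 _) (by omega) (by rw [hlamr]; omega)
    have hal : r + 1 ≤ T ⟨r, hrlt⟩ (n-1) := by
      by_cases h1 : r = 1
      · subst h1
        have hc := hcol ⟨0, h0lt⟩ ⟨1, hrlt⟩ (Fin.mk_lt_mk.mpr (by omega)) (n-1)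
          (hmu_le _ _ (by omega)) (by rw [hlam_zero _ rfl]; omega)
          (hmu_le _ _ (by omega)) (by rw [hlamr]; omega)
        rw [row0 (n-1) (by omega) (by omega)] at hc
        omega
      · have hv := (ih (r-1) (by omega) (by omega) (by omega)).1
        have hc := hcol ⟨r-1, by omega⟩ ⟨r, hrlt⟩ (Fin.mk_lt_mk.mpr (by omega)) (n-1)
          (hmu_le _ _ (by omega))
          (by rw [hlam_pos _ (by exact (by omega : ¬ r - 1 = 0))]; omega)
          (hmu_le _ _ (by omega)) (by rw [hlamr]; omega)
        rw [hv] at hc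
        omega
    exact ⟨by omega, by omega⟩
  have hMj := main j hj le_rfl
  have hBsj : ∀ s, 1 ≤ s → s < j → Blk m n j T s = [s+1, s+1] := by
    intro s hs1 hsj
    rw [Blk_mid m n j T hn s hs1 hsj,
      (main s hs1 (by omega)).1, (main s hs1 (by omega)).2]
  have hcntj := fun i hi => count_pre m n j T j hj le_rfl hB0 hBsj i hi
  -- Step C : entries of row j in columns < n-1 are at most 2
  have left_le : ∀ c, c < n - 1 → T ⟨j, hjlt⟩ c ≤ 2 := by
    intro c hc
    have hmono := hrow ⟨j, hjlt⟩ c (n-2) (by rw [hmujj]; omega) (by omega)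
      (by rw [hlamjj]; omega)
    suffices h : T ⟨j, hjlt⟩ (n-2) ≤ 2 by omega
    by_contra hcon
    push_neg at hcon
    have heu : T ⟨j, hjlt⟩ (n-2) ≤ j + 1 := by
      have h2 := hrow ⟨j, hjlt⟩ (n-2) (n-1) (by rw [hmujj]; omega) (by omega)
        (by rw [hlamjj]; omega)
      rw [show T ⟨j, hjlt⟩ (n-1) = j + 1 from hMj.1] at h2
      exact h2
    have h3len : 3 ≤ (Blk m n j T j).length := by
      rw [Blk_last m n j T hj]; simp; omega
    have htk3 : (Blk m n j T j).take 3 = [j+1, j+1, T ⟨j, hjlt⟩ (n-2)] := by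
      rw [Blk_last m n j T hj, ← List.map_take, List.take_range,
        show min 3 (n+1) = 3 from by omega, show List.range 3 = [0,1,2] from rfl]
      simp only [List.map_cons, List.map_nil]
      rw [show (n - 0) = n from rfl, show T ⟨j, hjlt⟩ n = j + 1 from hMj.2,
        show T ⟨j, hjlt⟩ (n-1) = j + 1 from hMj.1]
    have htk := take_flatMap (Blk m n j T) (j+1) j 3 (by omega) h3len
    rw [htk3] at htk
    have hl := hlat (((List.range j).flatMap (Blk m n j T)).length + 3)
      (T ⟨j, hjlt⟩ (n-2) - 1) (by omega)
    rw [htk, List.count_append, List.count_append,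
      show T ⟨j, hjlt⟩ (n-2) - 1 + 1 = T ⟨j, hjlt⟩ (n-2) from by omega,
      hcntj (T ⟨j, hjlt⟩ (n-2)) (by omega), hcntj (T ⟨j, hjlt⟩ (n-2) - 1) (by omega)] at hl
    simp only [List.count_cons, List.count_nil, beq_iff_eq] at hl
    split_ifs at hl <;> omega
  -- Step D : the 2-region of row j
  set t := ((Finset.range (n-1)).filter (fun c => T ⟨j, hjlt⟩ c = 2)).card with htdef
  have htle : t ≤ n - 1 := le_trans (Finset.card_filter_le _ _) (by simp)
  have hEq : (Finset.range (n-1)).filter (fun c => T ⟨j, hjlt⟩ c = 2)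
      = Finset.Ico (n-1-t) (n-1) := by
    have hup : ∀ c₁ ∈ (Finset.range (n-1)).filter (fun c => T ⟨j, hjlt⟩ c = 2),
        ∀ c₂, c₁ ≤ c₂ → c₂ < n - 1 →
        c₂ ∈ (Finset.range (n-1)).filter (fun c => T ⟨j, hjlt⟩ c = 2) := by
      intro c₁ h₁ c₂ hle hc₂
      simp only [Finset.mem_filter, Finset.mem_range] at h₁ ⊢
      refine ⟨hc₂, ?_⟩
      have hmono := hrow ⟨j, hjlt⟩ c₁ c₂ (by rw [hmujj]; omega) hle (by rw [hlamjj]; omega)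
      have := left_le c₂ hc₂
      omega
    have hsub : (Finset.range (n-1)).filter (fun c => T ⟨j, hjlt⟩ c = 2)
        ⊆ Finset.Ico (n-1-t) (n-1) := by
      intro c₁ h₁
      have hIco : Finset.Ico c₁ (n-1)
          ⊆ (Finset.range (n-1)).filter (fun c => T ⟨j, hjlt⟩ c = 2) := by
        intro c₂ h₂
        simp only [Finset.mem_Ico] at h₂
        exact hup c₁ h₁ c₂ h₂.1 h₂.2
      have hcard := Finset.card_le_card hIco
      rw [Nat.card_Ico, ← htdef] at hcard
      simp only [Finset.mem_filter, Finset.mem_range] at h₁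
      simp only [Finset.mem_Ico]
      omega
    apply Finset.eq_of_subset_of_card_le hsub
    rw [Nat.card_Ico, ← htdef]
    omega
  have region : ∀ c, c < n - 1 → T ⟨j, hjlt⟩ c = if n - 1 - t ≤ c then 2 else 1 := by
    intro c hc
    have hvge := hpos ⟨j, hjlt⟩ c (by rw [hmujj]; omega) (by rw [hlamjj]; omega)
    have hvle := left_le c hc
    split_ifs with hcase
    · have hmem : c ∈ Finset.Ico (n-1-t) (n-1) := Finset.mem_Ico.mpr ⟨hcase, hc⟩
      rw [← hEq] at hmem
      simp only [Finset.mem_filter] at hmem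
      exact hmem.2
    · by_contra hne
      have h2 : T ⟨j, hjlt⟩ c = 2 := by omega
      have hmem : c ∈ (Finset.range (n-1)).filter (fun c => T ⟨j, hjlt⟩ c = 2) := by
        simp only [Finset.mem_filter, Finset.mem_range]
        exact ⟨hc, h2⟩
      rw [hEq] at hmem
      simp only [Finset.mem_Ico] at hmem
      omega
  -- Step E : t + 1 ≤ m
  have hxm : t + 1 ≤ m := by
    by_cases ht0 : t = 0
    · omega
    · have hlen : t + 2 ≤ (Blk m n j T j).length := by
        rw [Blk_last m n j T hj]; simp; omega
      have htkblk : (Blk m n j T j).take (t+2) = (j+1) :: (j+1) :: List.replicate t 2 := by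
        rw [Blk_last m n j T hj, ← List.map_take, List.take_range,
          show min (t+2) (n+1) = t + 2 from by omega,
          show t + 2 = 2 + t from by omega, List.range_add, List.map_append,
          show List.range 2 = [0,1] from rfl]
        simp only [List.map_cons, List.map_nil, List.map_map]
        rw [show (n - 0) = n from rfl, show T ⟨j, hjlt⟩ n = j + 1 from hMj.2,
          show T ⟨j, hjlt⟩ (n-1) = j + 1 from hMj.1]
        have hrep : (List.range t).map ((fun k => T ⟨j, hjlt⟩ (n - k)) ∘ (fun x => 2 + x))
            = List.replicate t 2 := by
          refine List.eq_replicate_iff.mpr ⟨by simp, ?_⟩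
          intro b hb
          simp only [List.mem_map, List.mem_range, Function.comp] at hb
          obtain ⟨k, hk, rfl⟩ := hb
          have hr := region (n - (2+k)) (by omega)
          rw [if_pos (by omega)] at hr
          exact hr
        rw [hrep]
        rfl
      have htk := take_flatMap (Blk m n j T) (j+1) j (t+2) (by omega) hlen
      rw [htkblk] at htk
      have hl := hlat (((List.range j).flatMap (Blk m n j T)).length + (t+2)) 1 le_rfl
      rw [htk, show (1:ℕ) + 1 = 2 from rfl, List.count_append, List.count_append,
        hcntj 2 (by omega), hcntj 1 (by omega)] at hl
      simp only [List.count_cons, List.count_replicate, List.count_nil, beq_iff_eq] at hl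
      split_ifs at hl <;> omega
  -- Step F : T = TX m n j (t+1)
  refine ⟨t+1, by omega, by omega, by omega, ?_⟩
  have hmu00 : muF n j ⟨0, h0lt⟩ = n - 1 := if_pos (by exact (by omega : 0 < j))
  funext r c
  by_cases hr0 : (r:ℕ) = 0
  · rw [show r = ⟨0, h0lt⟩ from Fin.ext hr0]
    unfold TX
    rw [if_pos (show ((⟨0, h0lt⟩ : Fin (j+1)) : ℕ) = 0 from rfl)]
    by_cases hcs : n - 1 ≤ c ∧ c < m + n
    · rw [if_pos hcs]
      exact row0 c hcs.1 hcs.2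
    · rw [if_neg hcs]
      refine hz _ _ ?_
      rw [hmu00, hlam_zero _ rfl]
      exact hcs
  · by_cases hrj : (r:ℕ) < j
    · unfold TX
      rw [if_neg hr0, if_pos hrj]
      by_cases hcs : n - 1 ≤ c ∧ c < n + 1
      · rw [if_pos hcs]
        have hcc : c = n - 1 ∨ c = n := by omega
        rcases hcc with rfl | rfl
        · exact (main (r:ℕ) (by omega) (by omega)).1
        · exact (main (r:ℕ) (by omega) (by omega)).2
      · rw [if_neg hcs]
        refine hz _ _ ?_
        rw [show muF n j r = n - 1 from if_pos hrj, hlam_pos _ hr0]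
        exact hcs
    · have hrlt := r.isLt
      rw [show r = ⟨j, hjlt⟩ from Fin.ext (show (r:ℕ) = j by omega)]
      unfold TX
      rw [if_neg (show ¬((⟨j, hjlt⟩ : Fin (j+1)) : ℕ) = 0 from by exact (by omega : ¬ j = 0)),
        if_neg (show ¬((⟨j, hjlt⟩ : Fin (j+1)) : ℕ) < j from by exact (by omega : ¬ j < j))]
      by_cases hc1 : c < n + 1
      · rw [if_pos hc1]
        by_cases hc2 : n - 1 ≤ c
        · rw [if_pos hc2]
          have hcc : c = n - 1 ∨ c = n := by omega
          rcases hcc with rfl | rfl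
          · exact hMj.1
          · exact hMj.2
        · rw [if_neg hc2]
          have hr := region c (by omega)
          rw [hr, show n - (t+1) = n - 1 - t from by omega]
      · rw [if_neg hc1]
        refine hz _ _ ?_
        rw [hmujj, hlamjj]
        omega

lemma TX_val_mid (m n j x s : ℕ) (h : s < j+1) (hs1 : 1 ≤ s) (hsj : s < j)
    (c : ℕ) (hc1 : n - 1 ≤ c) (hc2 : c < n + 1) :
    TX m n j x ⟨s, h⟩ c = s + 1 := by
  unfold TX
  rw [if_neg (by exact (by omega : ¬ s = 0)), if_pos (by exact hsj), if_pos ⟨hc1, hc2⟩]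

lemma TX_valj (m n j x : ℕ) (h : j < j+1) (hj : 1 ≤ j) (c : ℕ) (hc : c < n + 1) :
    TX m n j x ⟨j, h⟩ c = if n - 1 ≤ c then j + 1 else if n - x ≤ c then 2 else 1 := by
  unfold TX
  rw [if_neg (by exact (by omega : ¬ j = 0)), if_neg (by exact (by omega : ¬ j < j)),
    if_pos hc]

lemma TX_B0 (m n j x : ℕ) (hm : 1 ≤ m) (hn : 1 ≤ n) (hj : 1 ≤ j) :
    Blk m n j (TX m n j x) 0 = List.replicate (m+1) 1 := by
  rw [Blk_zero m n j _ hn hj]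
  refine List.eq_replicate_iff.mpr ⟨by simp, ?_⟩
  intro b hb
  simp only [List.mem_map, List.mem_range] at hb
  obtain ⟨k, hk, rfl⟩ := hb
  unfold TX
  rw [if_pos (show ((⟨0, Nat.succ_pos j⟩ : Fin (j+1)) : ℕ) = 0 from rfl),
    if_pos (by constructor <;> omega)]

lemma TX_Bmid (m n j x : ℕ) (hn : 1 ≤ n) (s : ℕ) (hs1 : 1 ≤ s) (hsj : s < j) :
    Blk m n j (TX m n j x) s = [s+1, s+1] := by
  rw [Blk_mid m n j _ hn s hs1 hsj,
    TX_val_mid m n j x s (by omega) hs1 hsj n (by omega) (by omega),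
    TX_val_mid m n j x s (by omega) hs1 hsj (n-1) (by omega) (by omega)]

lemma TX_Bj (m n j x : ℕ) (hn : 1 ≤ n) (hj : 1 ≤ j) (hx1 : 1 ≤ x) (hxn : x ≤ n) :
    Blk m n j (TX m n j x) j
      = List.replicate 2 (j+1) ++ (List.replicate (x-1) 2 ++ List.replicate (n-x) 1) := by
  rw [Blk_last m n j _ hj, show n + 1 = 2 + (n - 1) from by omega, List.range_add,
    List.map_append]
  congr 1
  · rw [show List.range 2 = [0, 1] from rfl]
    simp only [List.map_cons, List.map_nil]
    rw [show (n - 0) = n from rfl,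
      TX_valj m n j x (by omega) hj n (by omega), if_pos (by omega),
      TX_valj m n j x (by omega) hj (n-1) (by omega), if_pos (by omega)]
    rfl
  · rw [List.map_map, show n - 1 = (x - 1) + (n - x) from by omega, List.range_add,
      List.map_append]
    congr 1
    · refine List.eq_replicate_iff.mpr ⟨by simp, ?_⟩
      intro b hb
      simp only [List.mem_map, List.mem_range, Function.comp] at hb
      obtain ⟨k, hk, rfl⟩ := hb
      rw [TX_valj m n j x (by omega) hj (n - (2 + k)) (by omega),
        if_neg (by omega), if_pos (by omega)]
    · refine List.eq_replicate_iff.mpr ⟨by simp, ?_⟩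
      intro b hb
      simp only [List.mem_map, List.mem_range, Function.comp] at hb
      obtain ⟨k, hk, rfl⟩ := hb
      obtain ⟨a, ha, rfl⟩ := hk
      rw [TX_valj m n j x (by omega) hj (n - (2 + (x - 1 + a))) (by omega),
        if_neg (by omega), if_neg (by omega)]

lemma TX_word (m n j x : ℕ) (hm : 1 ≤ m) (hn : 1 ≤ n) (hj : 1 ≤ j)
    (hx1 : 1 ≤ x) (hxn : x ≤ n) :
    revWord (j+1) (lamF m n j) (muF n j) (TX m n j x)
      = List.replicate (m+1) 1 ++ (DW (j-1) ++ (List.replicate 2 (j+1)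
          ++ (List.replicate (x-1) 2 ++ List.replicate (n-x) 1))) := by
  obtain ⟨J, rfl⟩ : ∃ J, j = J + 1 := ⟨j - 1, by omega⟩
  rw [show J + 1 - 1 = J from rfl]
  rw [revWord_eq, show J + 1 + 1 = 1 + (J + 1) from by omega, List.range_add,
    List.flatMap_append, List.flatMap_map]
  congr 1
  · rw [show List.range 1 = [0] from rfl, List.flatMap_cons, List.flatMap_nil,
      List.append_nil, TX_B0 m n (J+1) x hm hn hj]
  · have key : ∀ K, K ≤ J →
        (List.range K).flatMap (fun s => Blk m n (J+1) (TX m n (J+1) x) (1 + s)) = DW K := by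
      intro K
      induction K with
      | zero => intro _; rfl
      | succ K ihK =>
        intro hK
        rw [List.range_succ, List.flatMap_append, ihK (by omega), List.flatMap_cons,
          List.flatMap_nil, List.append_nil, DW_succ,
          TX_Bmid m n (J+1) x hn (1 + K) (by omega) (by omega),
          show 1 + K + 1 = K + 2 from by omega]
    rw [List.range_succ, List.flatMap_append, key J le_rfl, List.flatMap_cons,
      List.flatMap_nil, List.append_nil, show 1 + J = J + 1 from by omega,
      TX_Bj m n (J+1) x hn hj hx1 hxn,
      show 1 + (J + 1) = J + 1 + 1 from by omega]

lemma TX_content (m n j x : ℕ) (hm : 1 ≤ m) (hn : 1 ≤ n) (hj : 1 ≤ j)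
    (hx1 : 1 ≤ x) (hxn : x ≤ n) :
    ∀ i, 1 ≤ i →
      (revWord (j+1) (lamF m n j) (muF n j) (TX m n j x)).count i = uC m n j x i := by
  intro i hi
  rw [TX_word m n j x hm hn hj hx1 hxn]
  simp only [List.count_append, List.count_replicate, count_DW, uC, beq_iff_eq]
  split_ifs <;> omega

lemma TX_lattice (m n j x : ℕ) (hm : 1 ≤ m) (hn : 1 ≤ n) (hj : 1 ≤ j)
    (hx1 : 1 ≤ x) (hxm : x ≤ m) (hxn : x ≤ n) :
    IsLatticeWord (revWord (j+1) (lamF m n j) (muF n j) (TX m n j x)) := by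
  rw [IsLatticeWord, TX_word m n j x hm hn hj hx1 hxn]
  intro p i hi
  by_cases hi1 : i = 1
  · subst hi1
    rw [show (1:ℕ) + 1 = 2 from rfl]
    by_cases hp : p ≤ m + 1
    · rw [List.take_append_of_le_length (by rw [List.length_replicate]; exact hp),
        List.take_replicate]
      simp only [List.count_replicate, beq_iff_eq]
      split_ifs <;> omega
    · rw [List.take_append,
        List.take_of_length_le (by rw [List.length_replicate]; omega),
        List.count_append, List.count_append, List.count_replicate, List.count_replicate]
      have h2 := count_take_le (DW (j-1) ++ (List.replicate 2 (j+1)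
          ++ (List.replicate (x-1) 2 ++ List.replicate (n-x) 1)))
          (p - (List.replicate (m+1) (1:ℕ)).length) 2
      have h1 := Nat.zero_le ((DW (j-1) ++ (List.replicate 2 (j+1)
          ++ (List.replicate (x-1) 2 ++ List.replicate (n-x) 1))).take
          (p - (List.replicate (m+1) (1:ℕ)).length) |>.count 1)
      have hc2 : (DW (j-1) ++ (List.replicate 2 (j+1)
          ++ (List.replicate (x-1) 2 ++ List.replicate (n-x) 1))).count 2 = x + 1 := by
        simp only [List.count_append, List.count_replicate, count_DW, beq_iff_eq]
        split_ifs <;> omega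
      rw [hc2] at h2
      simp only [beq_iff_eq]
      split_ifs <;> omega
  · have hi2 : 2 ≤ i := by omega
    rw [List.take_append, List.take_append,
      List.take_append, List.take_append]
    simp only [List.count_append, List.take_replicate, List.count_replicate,
      List.length_replicate, length_DW, beq_iff_eq]
    have f1 := DW_lattice (j-1) (p - (m+1)) i hi2
    have f2 := count_take_le (DW (j-1)) (p - (m+1)) (i+1)
    have f3 := count_take_le (DW (j-1)) (p - (m+1)) i
    rw [count_DW] at f2 f3
    by_cases hq2 : p - (m+1) - 2*(j-1) = 0
    · rw [hq2]
      split_ifs <;> omega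
    · have hfull : (DW (j-1)).take (p - (m+1)) = DW (j-1) :=
        List.take_of_length_le (by rw [length_DW]; omega)
      rw [hfull]
      simp only [count_DW]
      split_ifs <;> omega

lemma TX_ssyt (m n j x : ℕ) (hm : 1 ≤ m) (hn : 1 ≤ n) (hj : 1 ≤ j)
    (hx1 : 1 ≤ x) (hxn : x ≤ n) :
    IsSSYT (j+1) (lamF m n j) (muF n j) (TX m n j x) := by
  refine ⟨?_, ?_, ?_, ?_⟩
  · intro r c hc
    simp only [lamF, muF] at hc
    unfold TX
    split_ifs at hc ⊢ <;> omega
  · intro r c h1 h2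
    simp only [lamF, muF] at h1 h2
    unfold TX
    split_ifs at h1 h2 ⊢ <;> omega
  · intro r c₁ c₂ h1 hle h2
    simp only [lamF, muF] at h1 h2
    unfold TX
    split_ifs at h1 h2 ⊢ <;> omega
  · intro r₁ r₂ hlt c h1 h2 h3 h4
    have hv : (r₁:ℕ) < (r₂:ℕ) := hlt
    simp only [lamF, muF] at h1 h2 h3 h4
    unfold TX
    split_ifs at h1 h2 h3 h4 ⊢ <;> omega

lemma uC_two (m n j x : ℕ) : uC m n j x 2 = x + 1 := rfl

theorem master (m n j : ℕ) (hm : 1 ≤ m) (hn : 1 ≤ n) (hj : 1 ≤ j) :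
    (∀ x, 1 ≤ x → x ≤ min m n →
      ∃! T : Fin (j+1) → ℕ → ℕ,
        IsLRTableau (j+1) (lamF m n j) (muF n j) T ∧
        HasContent (j+1) (lamF m n j) (muF n j) T (uC m n j x))
    ∧ (∀ T : Fin (j+1) → ℕ → ℕ, IsLRTableau (j+1) (lamF m n j) (muF n j) T →
        ∃ x, 1 ≤ x ∧ x ≤ min m n ∧
          HasContent (j+1) (lamF m n j) (muF n j) T (uC m n j x)) := by
  constructor
  · intro x hx1 hxmn
    have hxm : x ≤ m := le_trans hxmn (min_le_left _ _)
    have hxn : x ≤ n := le_trans hxmn (min_le_right _ _)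
    refine ⟨TX m n j x,
      ⟨⟨TX_ssyt m n j x hm hn hj hx1 hxn, TX_lattice m n j x hm hn hj hx1 hxm hxn⟩,
        TX_content m n j x hm hn hj hx1 hxn⟩, ?_⟩
    rintro T ⟨hLR, hC⟩
    obtain ⟨x', hx'1, hx'm, hx'n, rfl⟩ := characterize m n j hm hn hj T hLR
    have h2 := hC 2 (by omega)
    have h2' := TX_content m n j x' hm hn hj hx'1 hx'n 2 (by omega)
    rw [h2'] at h2
    rw [uC_two, uC_two] at h2
    rw [show x' = x from by omega]
  · intro T hLR
    obtain ⟨x, h1, h2, h3, rfl⟩ := characterize m n j hm hn hj T hLR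
    exact ⟨x, h1, le_min h2 h3, TX_content m n j x hm hn hj h1 h3⟩

end S9

/-- For `m, d, j ≥ 1` with `2j ≤ d-1`, and the skew shape
`λ/μ = (m+d-2j, (d-2j+1)^j) / ((d-2j-1)^j)`:
(a) for each `1 ≤ x ≤ min(m, d-2j)` there is exactly one Littlewood-Richardson
tableau of shape `λ/μ` and content `(m+d-2j-x+1, x+1, 2^{j-1})`; and
(b) every Littlewood-Richardson tableau of shape `λ/μ` has content of this form
for some such `x`. -/


theorem stmt9 (m d j : ℕ) (hm : 1 ≤ m) (hd : 1 ≤ d) (hj : 1 ≤ j) (hjd : 2*j ≤ d - 1)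
    (lam : Fin (j+1) → ℕ) (mu : Fin (j+1) → ℕ)
    (hlam : lam = fun k : Fin (j+1) => if (k : ℕ) = 0 then m + d - 2*j else d - 2*j + 1)
    (hmu : mu = fun k : Fin (j+1) => if (k : ℕ) < j then d - 2*j - 1 else 0) :
    (∀ x, 1 ≤ x → x ≤ min m (d - 2*j) →
      ∃! T : Fin (j+1) → ℕ → ℕ,
        IsLRTableau (j+1) lam mu T ∧ HasContent (j+1) lam mu T (uniformContent m d j x))
    ∧ (∀ T : Fin (j+1) → ℕ → ℕ, IsLRTableau (j+1) lam mu T →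
        ∃ x, 1 ≤ x ∧ x ≤ min m (d - 2*j) ∧
          HasContent (j+1) lam mu T (uniformContent m d j x)) := by
  have hn : 1 ≤ d - 2*j := by omega
  have hlam' : lam = S9.lamF m (d - 2*j) j := by
    rw [hlam]; funext k; simp only [S9.lamF]; split_ifs <;> omega
  have hmu' : mu = S9.muF (d - 2*j) j := by
    rw [hmu]; rfl
  have hucontent : uniformContent m d j = S9.uC m (d - 2*j) j := by
    funext x i; simp only [uniformContent, S9.uC]; split_ifs <;> omega
  rw [hlam', hmu', hucontent]
  exact S9.master m (d - 2*j) j hm hn hj
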